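/- Let n ≥ 1, let H and B be Hermitian n×n complex matrices, let β > 0, and let C be any n×n complex matrix. Set Z = tr(exp(−βH)) (which is a positive real). Then the function δ ↦ tr(C · exp(−βH + δB)) / tr(exp(−βH + δB)) (δ ∈ ℝ) has derivative at δ = 0 equal to (1/β)∫_{λ∈[0,β]} tr(C · exp(−(β−λ)H) · B · exp(−λH)) dλ / Z − (tr(C·exp(−βH))/Z)·(tr(B·exp(−βH))/Z). (Kubo linear-response formula: applied to C = exp(itH) A exp(−itH), this gives Eq. (1) of the paper, ∂_δ⟨A(t)⟩_δ|_{δ=0} = ∫_0^β (dλ/β) ⟨A(t) ρ(β−λ) B ρ(β−λ)^{−1}⟩ − ⟨A(t)⟩⟨B⟩ with ρ(x) = exp(−xH).) -/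

import Mathlib

open MeasureTheory Matrix

attribute [local instance] Matrix.linftyOpNormedAddCommGroup Matrix.linftyOpNormedSpace
  Matrix.linftyOpNormedRing Matrix.linftyOpNormedAlgebra

open MeasureTheory Matrix NormedSpace intervalIntegral
open scoped Nat

attribute [local instance] Matrix.linftyOpNormedAddCommGroup Matrix.linftyOpNormedSpace
  Matrix.linftyOpNormedRing Matrix.linftyOpNormedAlgebra

namespace KuboAux

variable {n : ℕ}

noncomputable abbrev trC (C : Matrix (Fin n) (Fin n) ℂ) :
    Matrix (Fin n) (Fin n) ℂ →L[ℝ] ℂ :=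
  LinearMap.toContinuousLinearMap
    ((Matrix.traceLinearMap (Fin n) ℝ ℂ).comp (LinearMap.mulLeft ℝ C))

@[simp] lemma trC_apply (C M : Matrix (Fin n) (Fin n) ℂ) : trC C M = (C * M).trace := rfl

lemma cont_exp_path (M : Matrix (Fin n) (Fin n) ℂ) :
    Continuous fun s : ℝ => exp (s • M) :=
  exp_continuous.comp (continuous_id.smul continuous_const)

lemma duhamel (A M : Matrix (Fin n) (Fin n) ℂ) :
    exp M - exp A =
      ∫ s in (0:ℝ)..1, exp (s • M) * (M - A) * exp ((1 - s) • A) := by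
  have hg : ∀ s : ℝ, HasDerivAt (fun s : ℝ => exp (s • M) * exp ((1 - s) • A))
      (exp (s • M) * (M - A) * exp ((1 - s) • A)) s := by
    intro s
    have h1 : HasDerivAt (fun s : ℝ => exp (s • M)) (exp (s • M) * M) s :=
      hasDerivAt_exp_smul_const M s
    have h2 : HasDerivAt (fun s : ℝ => exp ((1 - s) • A))
        ((-1 : ℝ) • (exp ((1 - s) • A) * A)) s :=
      (hasDerivAt_exp_smul_const A (1 - s)).scomp s
        (((hasDerivAt_id s).const_sub 1))
    have hcomm : exp ((1 - s) • A) * A = A * exp ((1 - s) • A) :=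
      (((Commute.refl A).smul_left (1 - s)).exp_left).eq
    have := h1.mul h2
    refine this.congr_deriv ?_
    rw [hcomm]
    simp only [neg_one_smul]
    noncomm_ring
  have hint := Continuous.intervalIntegrable (μ := volume)
      (u := fun s : ℝ => exp (s • M) * (M - A) * exp ((1 - s) • A)) (by
    exact ((cont_exp_path M).mul continuous_const).mul
      (exp_continuous.comp ((continuous_const.sub continuous_id).smul continuous_const))) 0 1
  have := intervalIntegral.integral_eq_sub_of_hasDerivAt (fun t _ => hg t) hint
  rw [this]
  simp [NormedSpace.exp_zero]


lemma hasDerivAt_exp_path (A B : Matrix (Fin n) (Fin n) ℂ) :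
    HasDerivAt (fun δ : ℝ => exp (A + δ • B))
      (∫ s in (0:ℝ)..1, exp (s • A) * B * exp ((1 - s) • A)) 0 := by
  set Φ : ℝ → Matrix (Fin n) (Fin n) ℂ :=
    fun δ => ∫ s in (0:ℝ)..1, exp (s • (A + δ • B)) * B * exp ((1 - s) • A) with hΦ
  have key : ∀ δ : ℝ, exp (A + δ • B) - exp A = δ • Φ δ := by
    intro δ
    rw [duhamel A (A + δ • B)]
    simp only [add_sub_cancel_left, hΦ]
    rw [← intervalIntegral.integral_smul]
    congr 1
    ext s
    rw [mul_smul_comm, smul_mul_assoc]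
  have hΦc : Continuous Φ := by
    apply continuous_parametric_intervalIntegral_of_continuous' (μ := volume)
    apply Continuous.mul
    apply Continuous.mul
    · exact exp_continuous.comp (continuous_snd.smul
        (continuous_const.add (continuous_fst.smul continuous_const)))
    · exact continuous_const
    · exact exp_continuous.comp ((continuous_const.sub continuous_snd).smul continuous_const)
  have hΦ0 : Φ 0 = ∫ s in (0:ℝ)..1, exp (s • A) * B * exp ((1 - s) • A) := by
    simp [hΦ]
  rw [← hΦ0]; refine hasDerivAt_iff_tendsto_slope.mpr ?_
  have heq : ∀ᶠ δ in nhdsWithin (0:ℝ) {(0:ℝ)}ᶜ,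
      slope (fun δ : ℝ => exp (A + δ • B)) 0 δ = Φ δ := by
    filter_upwards [self_mem_nhdsWithin] with δ hδ
    have hδ0 : δ ≠ 0 := hδ
    rw [slope_def_module, zero_smul, add_zero, key δ, sub_zero, smul_smul,
      inv_mul_cancel₀ hδ0, one_smul]
  exact Filter.Tendsto.congr' (heq.mono fun δ h => h.symm)
    ((hΦc.tendsto 0).mono_left nhdsWithin_le_nhds)


lemma conj_pow_aux {U D : Matrix (Fin n) (Fin n) ℂ} (h1 : U * star U = 1)
    (h2 : star U * U = 1) (k : ℕ) : (U * D * star U) ^ k = U * D ^ k * star U := by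
  induction k with
  | zero => simp [h1]
  | succ k ih =>
      rw [pow_succ, ih, pow_succ]
      calc U * D ^ k * star U * (U * D * star U)
          = U * D ^ k * (star U * U) * D * star U := by
            simp only [Matrix.mul_assoc]
        _ = U * (D ^ k * D) * star U := by rw [h2]; simp only [Matrix.mul_one, Matrix.mul_assoc]

lemma trace_exp_hermitian {A : Matrix (Fin n) (Fin n) ℂ} (hA : A.IsHermitian) :
    (exp A).trace = ∑ i, Complex.exp (hA.eigenvalues i : ℂ) := by
  set U : Matrix (Fin n) (Fin n) ℂ := (hA.eigenvectorUnitary : Matrix (Fin n) (Fin n) ℂ) with hU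
  have h1 : U * star U = 1 := Matrix.mem_unitaryGroup_iff.mp hA.eigenvectorUnitary.2
  have h2 : star U * U = 1 := Matrix.mem_unitaryGroup_iff'.mp hA.eigenvectorUnitary.2
  set d : Fin n → ℂ := RCLike.ofReal ∘ hA.eigenvalues with hd
  have hpow : ∀ k : ℕ, (A ^ k).trace = ∑ i, d i ^ k := by
    intro k
    conv_lhs => rw [hA.spectral_theorem, Unitary.conjStarAlgAut_apply, conj_pow_aux h1 h2]
    rw [Matrix.trace_mul_cycle, h2, Matrix.one_mul,
      Matrix.diagonal_pow, Matrix.trace_diagonal]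
    simp [hd, RCLike.ofReal]
  have hsummable : Summable fun k : ℕ => ((k ! : ℂ)⁻¹) • (A ^ k) :=
    NormedSpace.expSeries_summable' (𝕂 := ℂ) A
  have step1 : (exp A).trace = ∑' k : ℕ, (((k ! : ℂ)⁻¹) • (A ^ k) : Matrix (Fin n) (Fin n) ℂ).trace := by
    rw [NormedSpace.exp_eq_tsum ℂ]
    have := (trC (1 : Matrix (Fin n) (Fin n) ℂ)).map_tsum hsummable
    simpa [Matrix.one_mul] using this
  rw [step1]
  have step2 : ∀ k : ℕ, (((k ! : ℂ)⁻¹) • (A ^ k) : Matrix (Fin n) (Fin n) ℂ).trace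
      = ∑ i, ((k ! : ℂ)⁻¹) * d i ^ k := by
    intro k
    rw [Matrix.trace_smul, hpow k, smul_eq_mul, Finset.mul_sum]
  rw [tsum_congr step2]
  have hsumz : ∀ z : ℂ, Summable fun k : ℕ => ((k ! : ℂ)⁻¹) * z ^ k := by
    intro z
    simpa [smul_eq_mul] using NormedSpace.expSeries_summable' (𝕂 := ℂ) z
  rw [Summable.tsum_finsetSum (fun i _ => hsumz (d i))]
  refine Finset.sum_congr rfl fun i _ => ?_
  have : ∑' k : ℕ, ((k ! : ℂ)⁻¹) * d i ^ k = exp (d i) := by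
    rw [NormedSpace.exp_eq_tsum ℂ]
    simp [smul_eq_mul]
  rw [this, ← Complex.exp_eq_exp_ℂ]
  rfl

lemma trace_exp_ne_zero (hn : 1 ≤ n) {A : Matrix (Fin n) (Fin n) ℂ} (hA : A.IsHermitian) :
    (exp A).trace ≠ 0 := by
  rw [trace_exp_hermitian hA]
  have : ∀ i : Fin n, Complex.exp (hA.eigenvalues i : ℂ) = ((Real.exp (hA.eigenvalues i) : ℝ) : ℂ) :=
    fun i => (Complex.ofReal_exp _).symm
  rw [Finset.sum_congr rfl fun i _ => this i, ← Complex.ofReal_sum]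
  have hpos : 0 < ∑ i : Fin n, Real.exp (hA.eigenvalues i) := by
    have : Nonempty (Fin n) := Fin.pos_iff_nonempty.mp hn
    exact Finset.sum_pos (fun i _ => Real.exp_pos _) Finset.univ_nonempty
  exact_mod_cast hpos.ne'

end KuboAux

open KuboAux


/-- **Kubo linear-response formula**: for Hermitian `H`, `B`, inverse temperature `β > 0`
and any matrix `C`, the derivative at `δ = 0` of
`δ ↦ tr (C exp (−βH + δB)) / tr (exp (−βH + δB))` equals
`(1/β) ∫_{λ∈[0,β]} tr (C exp(−(β−λ)H) B exp(−λH)) dλ / Z − (tr(C e^{−βH})/Z)(tr(B e^{−βH})/Z)`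
where `Z = tr (exp (−βH))`. -/
theorem kubo_linear_response (n : ℕ) (hn : 1 ≤ n)
    (H B C : Matrix (Fin n) (Fin n) ℂ)
    (hH : H.IsHermitian) (hB : B.IsHermitian) (β : ℝ) (hβ : 0 < β) :
    HasDerivAt
      (fun δ : ℝ =>
        (C * NormedSpace.exp ((-β) • H + δ • B)).trace /
          (NormedSpace.exp ((-β) • H + δ • B)).trace)
      ((β : ℂ)⁻¹ *
          (∫ l in Set.Icc (0 : ℝ) β,
            (C * NormedSpace.exp ((-(β - l)) • H) * B * NormedSpace.exp ((-l) • H)).trace) /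
          (NormedSpace.exp ((-β) • H)).trace -
        ((C * NormedSpace.exp ((-β) • H)).trace / (NormedSpace.exp ((-β) • H)).trace) *
          ((B * NormedSpace.exp ((-β) • H)).trace / (NormedSpace.exp ((-β) • H)).trace))
      0 := by
  set A : Matrix (Fin n) (Fin n) ℂ := (-β) • H with hA
  have hAherm : A.IsHermitian := by
    rw [Matrix.IsHermitian, hA, Matrix.conjTranspose_smul, star_trivial, hH.eq]
  have hZ : (exp A).trace ≠ 0 := by
    exact trace_exp_ne_zero hn hAherm
  set D : Matrix (Fin n) (Fin n) ℂ :=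
    ∫ s in (0:ℝ)..1, exp (s • A) * B * exp ((1 - s) • A) with hD
  have hE : HasDerivAt (fun δ : ℝ => exp (A + δ • B)) D 0 := hasDerivAt_exp_path A B
  have hcont : Continuous fun s : ℝ => exp (s • A) * B * exp ((1 - s) • A) :=
    ((cont_exp_path A).mul continuous_const).mul
      (exp_continuous.comp ((continuous_const.sub continuous_id).smul continuous_const))
  have hF : HasDerivAt (fun δ : ℝ => (C * exp (A + δ • B)).trace) ((C * D).trace) 0 := by
    exact (trC C).hasFDerivAt.comp_hasDerivAt 0 hE
  have hG : HasDerivAt (fun δ : ℝ => (exp (A + δ • B)).trace) (D.trace) 0 := by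
    have hG1 : HasDerivAt (fun δ : ℝ => ((1 : Matrix (Fin n) (Fin n) ℂ) * exp (A + δ • B)).trace)
        ((1 * D).trace) 0 := by
      exact (trC (1 : Matrix (Fin n) (Fin n) ℂ)).hasFDerivAt.comp_hasDerivAt 0 hE
    simpa only [Matrix.one_mul] using hG1
  have hZ0 : (fun δ : ℝ => (exp (A + δ • B)).trace) 0 ≠ 0 := by
    simpa using hZ
  have hquot := hF.div hG hZ0
  simp only [zero_smul, add_zero] at hquot
  have key : ∀ δ : ℝ, (-β) • H + δ • B = A + δ • B := fun δ => rfl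
  -- (a) : (C * D).trace equals the Icc integral expression
  have traceD : ∀ X : Matrix (Fin n) (Fin n) ℂ, (X * D).trace =
      ∫ s in (0:ℝ)..1, (X * (exp (s • A) * B * exp ((1 - s) • A))).trace := by
    intro X
    have := (trC X).intervalIntegral_comp_comm (hcont.intervalIntegrable (μ := volume) 0 1)
    exact this.symm
  set g : ℝ → ℂ := fun l =>
    (C * exp ((-(β - l)) • H) * B * exp ((-l) • H)).trace with hg
  have ha : (C * D).trace = (β:ℂ)⁻¹ *
      ∫ l in Set.Icc (0:ℝ) β, g l := by
    rw [traceD C]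
    have hpt : ∀ s : ℝ, (C * (exp (s • A) * B * exp ((1 - s) • A))).trace
        = g ((1 - s) * β) := by
      intro s
      have e1 : s • A = (-(β - (1 - s) * β)) • H := by
        rw [hA, smul_smul]; congr 1; ring
      have e2 : (1 - s) • A = (-((1 - s) * β)) • H := by
        rw [hA, smul_smul]; congr 1; ring
      rw [e1, e2, hg]
      simp [Matrix.mul_assoc]
    rw [intervalIntegral.integral_congr (fun s _ => hpt s)]
    have h1 : (∫ s in (0:ℝ)..1, g ((1 - s) * β))
        = ∫ s in (0:ℝ)..1, g (s * β) := by
      have := intervalIntegral.integral_comp_sub_left (fun u => g (u * β)) 1 (a := 0) (b := 1)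
      simpa using this
    rw [h1, intervalIntegral.integral_comp_mul_right g hβ.ne']
    simp only [zero_mul, one_mul]
    rw [intervalIntegral.integral_of_le hβ.le, ← MeasureTheory.integral_Icc_eq_integral_Ioc]
    rw [← Complex.ofReal_inv]
    rw [Complex.real_smul]
  -- (b) : D.trace = (B * exp A).trace
  have hb : D.trace = (B * exp A).trace := by
    have := traceD 1
    simp only [Matrix.one_mul] at this
    rw [this]
    have hpt : ∀ s : ℝ, ((exp (s • A) * B * exp ((1 - s) • A))).trace
        = (B * exp A).trace := by
      intro s
      rw [Matrix.trace_mul_cycle]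
      have : exp ((1 - s) • A) * exp (s • A) = exp A := by
        rw [← Matrix.exp_add_of_commute _ _ (((Commute.refl A).smul_left _).smul_right _),
          ← add_smul]
        norm_num
      rw [this, Matrix.trace_mul_comm]
    rw [intervalIntegral.integral_congr (fun s _ => hpt s)]
    simp
  rw [ha, hb] at hquot
  refine hquot.congr_deriv ?_
  have hZ' : (exp A).trace ≠ 0 := hZ
  have hβc : (β : ℂ) ≠ 0 := by exact_mod_cast hβ.ne'
  field_simp
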